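/- For every K > 0 there is a constant C_K < ∞ such that for all finite nonnegative Borel measures ξ, ξ' on the d-dimensional torus, the measures Θ_K(ξ) := Θ_K(v)dx + (K/3)·ξ^⊥ (where ξ = v·dx + ξ^⊥ is the Lebesgue decomposition and Θ_K(ρ) = ρ²[1-(1+2K/(3ρ))e^{-K/ρ}]) satisfy ⟨1, Θ_K(ξ)⟩ ≤ C_K ⟨1, ξ⟩ and ‖Θ_K(ξ) - Θ_K(ξ')‖_{TV} ≤ C_K ‖ξ - ξ'‖_{TV}. -/

import Mathlib

open MeasureTheory Real

/-- The `d`-dimensional torus. -/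
abbrev Torus (d : ℕ) := Fin d → AddCircle (1 : ℝ)

/-- The truncated mobility `Θ_K(ρ) = ρ²[1-(1+2K/(3ρ))e^{-K/ρ}]`. -/
noncomputable def ThetaKfun (K ρ : ℝ) : ℝ :=
  ρ ^ 2 * (1 - (1 + 2 * K / (3 * ρ)) * Real.exp (-K / ρ))

/-- The extension of `Θ_K` to measures: apply `Θ_K` to the absolutely continuous part
and multiply the singular part by the asymptotic slope `K/3`. -/
noncomputable def ThetaKmeas (d : ℕ) (K : ℝ) (ξ : Measure (Torus d)) : Measure (Torus d) :=
  volume.withDensity (fun x => ENNReal.ofReal (ThetaKfun K ((ξ.rnDeriv volume x).toReal)))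
    + ENNReal.ofReal (K / 3) • ξ.singularPart volume

/-- Total variation distance between two (nonnegative) measures. -/
noncomputable def tvDist {X : Type*} [MeasurableSpace X] (μ ν : Measure X) : ENNReal :=
  (μ - ν) Set.univ + (ν - μ) Set.univ

section Analysis

lemma thetaKfun_zero (K : ℝ) : ThetaKfun K 0 = 0 := by simp [ThetaKfun]

lemma thetaKfun_hasDerivAt {K x : ℝ} (hx : 0 < x) :
    HasDerivAt (ThetaKfun K)
      (2 * x * (1 - Real.exp (-K / x))
        - (5 * K / 3 + 2 * K ^ 2 / (3 * x)) * Real.exp (-K / x)) x := by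
  have hx0 : x ≠ 0 := ne_of_gt hx
  have h1 : HasDerivAt (fun ρ : ℝ => -K / ρ) (K / x ^ 2) x := by
    have h := (hasDerivAt_inv hx0).const_mul (-K)
    have heq : (fun ρ : ℝ => -K * ρ⁻¹) = fun ρ : ℝ => -K / ρ := by
      funext ρ; rw [div_eq_mul_inv]
    rw [heq] at h
    refine h.congr_deriv ?_
    ring
  have h2 : HasDerivAt (fun ρ : ℝ => Real.exp (-K / ρ))
      (Real.exp (-K / x) * (K / x ^ 2)) x := h1.exp
  have h3 : HasDerivAt (fun ρ : ℝ => 1 + 2 * K / (3 * ρ))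
      (2 * K / 3 * -(x ^ 2)⁻¹) x := by
    have h := ((hasDerivAt_inv hx0).const_mul (2 * K / 3)).const_add 1
    have heq : (fun ρ : ℝ => 1 + 2 * K / 3 * ρ⁻¹) = fun ρ : ℝ => 1 + 2 * K / (3 * ρ) := by
      funext ρ; rw [← div_div, div_eq_mul_inv (2 * K / 3)]
    rw [heq] at h
    exact h
  have h4 := ((hasDerivAt_const x (1 : ℝ)).sub (h3.mul h2))
  have h5 := (hasDerivAt_pow 2 x).mul h4
  have hfun : ThetaKfun K = fun ρ : ℝ =>
      ρ ^ 2 * (1 - (1 + 2 * K / (3 * ρ)) * Real.exp (-K / ρ)) := rfl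
  rw [hfun]
  refine h5.congr_deriv ?_
  simp only [Pi.sub_apply, Pi.mul_apply]
  field_simp
  ring

lemma thetaKfun_deriv_bound {K x : ℝ} (hK : 0 < K) (hx : 0 < x) :
    |2 * x * (1 - Real.exp (-K / x))
        - (5 * K / 3 + 2 * K ^ 2 / (3 * x)) * Real.exp (-K / x)| ≤ 3 * K := by
  set g := Real.exp (-K / x) with hg
  have hg0 : 0 < g := Real.exp_pos _
  have hg1 : g ≤ 1 := by
    rw [hg, Real.exp_le_one_iff]
    have : 0 ≤ K / x := by positivity
    rw [neg_div]; linarith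
  have hgK : g ≤ x / K := by
    have h1 : K / x ≤ Real.exp (K / x) := by
      have := Real.add_one_le_exp (K / x); linarith
    have h2 : g = (Real.exp (K / x))⁻¹ := by rw [hg, neg_div, Real.exp_neg]
    rw [h2]
    have hKx : 0 < K / x := by positivity
    calc (Real.exp (K / x))⁻¹ ≤ (K / x)⁻¹ := by
          apply inv_anti₀ hKx h1
      _ = x / K := by field_simp
  have h1g : 1 - g ≤ K / x := by
    have := Real.add_one_le_exp (-(K / x))
    rw [hg, neg_div]; linarith
  have e1 : x * (K / x) = K := by field_simp
  have e2 : 2 * K ^ 2 / (3 * x) * (x / K) = 2 * K / 3 := by field_simp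
  have hb1 : x * (1 - g) ≤ K := by
    calc x * (1 - g) ≤ x * (K / x) := by
          apply mul_le_mul_of_nonneg_left h1g (le_of_lt hx)
      _ = K := e1
  have hb2 : 2 * K ^ 2 / (3 * x) * g ≤ 2 * K / 3 := by
    calc 2 * K ^ 2 / (3 * x) * g ≤ 2 * K ^ 2 / (3 * x) * (x / K) := by
          apply mul_le_mul_of_nonneg_left hgK (by positivity)
      _ = 2 * K / 3 := e2
  have hb3 : 5 * K / 3 * g ≤ 5 * K / 3 := by nlinarith
  have hb4 : 0 ≤ x * (1 - g) := by nlinarith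
  have hb5 : 0 ≤ (5 * K / 3 + 2 * K ^ 2 / (3 * x)) * g := by positivity
  rw [abs_le]
  constructor <;> nlinarith

lemma thetaKfun_nonneg {K : ℝ} (hK : 0 < K) {ρ : ℝ} (hρ : 0 ≤ ρ) : 0 ≤ ThetaKfun K ρ := by
  rcases eq_or_lt_of_le hρ with h | h
  · rw [← h, thetaKfun_zero]
  · have hy : 0 < K / ρ := by positivity
    have key : (1 + 2 * K / (3 * ρ)) * Real.exp (-K / ρ) ≤ 1 := by
      rw [neg_div, Real.exp_neg]
      rw [mul_inv_le_iff₀ (Real.exp_pos _), one_mul]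
      have h1 := Real.add_one_le_exp (K / ρ)
      have h2 : 2 * K / (3 * ρ) ≤ K / ρ := by
        rw [div_le_div_iff₀ (by positivity) (by positivity)]
        nlinarith
      linarith
    have : 0 ≤ 1 - (1 + 2 * K / (3 * ρ)) * Real.exp (-K / ρ) := by linarith
    exact mul_nonneg (by positivity) this

lemma thetaKfun_linear {K : ℝ} (hK : 0 < K) {ρ : ℝ} (hρ : 0 ≤ ρ) : ThetaKfun K ρ ≤ K * ρ := by
  rcases eq_or_lt_of_le hρ with h | h
  · rw [← h, thetaKfun_zero]; simp
  · have hg0 : 0 < Real.exp (-K / ρ) := Real.exp_pos _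
    have h1g : 1 - Real.exp (-K / ρ) ≤ K / ρ := by
      have := Real.add_one_le_exp (-(K / ρ))
      rw [neg_div]; linarith
    have hA : 1 ≤ 1 + 2 * K / (3 * ρ) := by
      have : 0 ≤ 2 * K / (3 * ρ) := by positivity
      linarith
    have key : 1 - (1 + 2 * K / (3 * ρ)) * Real.exp (-K / ρ) ≤ K / ρ := by
      nlinarith
    calc ThetaKfun K ρ ≤ ρ ^ 2 * (K / ρ) := by
          unfold ThetaKfun
          apply mul_le_mul_of_nonneg_left key (by positivity)
      _ = K * ρ := by field_simp

lemma thetaKfun_lipschitz {K : ℝ} (hK : 0 < K) {a b : ℝ} (ha : 0 ≤ a) (hb : 0 ≤ b) :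
    |ThetaKfun K a - ThetaKfun K b| ≤ 3 * K * |a - b| := by
  have hlip : LipschitzOnWith (Real.toNNReal (3 * K)) (ThetaKfun K) (Set.Ioi 0) := by
    apply (convex_Ioi (0 : ℝ)).lipschitzOnWith_of_nnnorm_hasDerivWithin_le
      (f' := fun x => 2 * x * (1 - Real.exp (-K / x))
        - (5 * K / 3 + 2 * K ^ 2 / (3 * x)) * Real.exp (-K / x))
    · intro x hx
      exact (thetaKfun_hasDerivAt (Set.mem_Ioi.1 hx)).hasDerivWithinAt
    · intro x hx
      rw [← NNReal.coe_le_coe, coe_nnnorm, Real.coe_toNNReal _ (by positivity)]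
      exact thetaKfun_deriv_bound hK (Set.mem_Ioi.1 hx)
  have key : ∀ c : ℝ, 0 < c → |ThetaKfun K c| ≤ K * c := by
    intro c hc
    rw [abs_of_nonneg (thetaKfun_nonneg hK hc.le)]
    exact thetaKfun_linear hK hc.le
  rcases eq_or_lt_of_le ha with h0a | h0a
  · rcases eq_or_lt_of_le hb with h0b | h0b
    · rw [← h0a, ← h0b]; simp
    · rw [← h0a, thetaKfun_zero, zero_sub, abs_neg]
      calc |ThetaKfun K b| ≤ K * b := key b h0b
        _ ≤ 3 * K * |0 - b| := by
            rw [zero_sub, abs_neg, abs_of_nonneg hb]; nlinarith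
  · rcases eq_or_lt_of_le hb with h0b | h0b
    · rw [← h0b, thetaKfun_zero, sub_zero]
      calc |ThetaKfun K a| ≤ K * a := key a h0a
        _ ≤ 3 * K * |a - 0| := by
            rw [sub_zero, abs_of_nonneg ha]; nlinarith
    · have := hlip.dist_le_mul a h0a b h0b
      rw [Real.dist_eq, Real.dist_eq, Real.coe_toNNReal _ (by positivity)] at this
      exact this

end Analysis

section MeasureLemmas

variable {X : Type*} [MeasurableSpace X]

lemma meas_le_sub_add (μ ν : Measure X) [IsFiniteMeasure μ] [IsFiniteMeasure ν] :
    μ ≤ (μ - ν) + ν := by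
  obtain ⟨s, hs, h1, h2⟩ := hahn_decomposition (μ := μ) (ν := ν)
  rw [Measure.le_iff]
  intro A hA
  have hAs : MeasurableSet (A ∩ s) := hA.inter hs
  have hrle : ν.restrict s ≤ μ.restrict s := by
    rw [Measure.le_iff]
    intro t ht
    rw [Measure.restrict_apply ht, Measure.restrict_apply ht]
    exact h1 _ (ht.inter hs) Set.inter_subset_right
  have key : (μ - ν) (A ∩ s) + ν (A ∩ s) = μ (A ∩ s) := by
    have h4 : (μ - ν) (A ∩ s) = ((μ - ν).restrict s) (A ∩ s) := by
      rw [Measure.restrict_apply hAs, Set.inter_assoc, Set.inter_self]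
    rw [h4, Measure.restrict_sub_eq_restrict_sub_restrict hs,
      Measure.sub_apply hAs hrle, Measure.restrict_apply hAs, Measure.restrict_apply hAs,
      Set.inter_assoc, Set.inter_self,
      tsub_add_cancel_of_le (h1 _ hAs Set.inter_subset_right)]
  have hmono : (μ - ν) (A ∩ s) ≤ (μ - ν) A := measure_mono Set.inter_subset_left
  have hdiff : μ (A \ s) ≤ ν (A \ s) := h2 _ (hA.diff hs) (fun x hx => hx.2)
  calc μ A = μ (A ∩ s) + μ (A \ s) := (measure_inter_add_diff A hs).symm
    _ = ((μ - ν) (A ∩ s) + ν (A ∩ s)) + μ (A \ s) := by rw [key]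
    _ ≤ ((μ - ν) A + ν (A ∩ s)) + ν (A \ s) := by
        exact add_le_add (add_le_add_left hmono _) hdiff
    _ = (μ - ν) A + (ν (A ∩ s) + ν (A \ s)) := by ring
    _ = (μ - ν) A + ν A := by rw [measure_inter_add_diff A hs]
    _ = ((μ - ν) + ν) A := by simp

/-- If `κ ≤ μ` and `κ` vanishes outside `T`, then `κ ≤ μ.restrict T`. -/
lemma le_restrict_of_null (κ μ : Measure X) (hκμ : κ ≤ μ) {T : Set X} (hT : MeasurableSet T)
    (h0 : κ Tᶜ = 0) : κ ≤ μ.restrict T := by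
  rw [Measure.le_iff]
  intro B hB
  have h1 : κ (B \ T) = 0 :=
    le_antisymm (le_trans (measure_mono (fun x hx => hx.2)) h0.le) zero_le
  calc κ B = κ (B ∩ T) + κ (B \ T) := (measure_inter_add_diff B hT).symm
    _ = κ (B ∩ T) := by rw [h1, add_zero]
    _ ≤ μ (B ∩ T) := Measure.le_iff'.1 hκμ _
    _ = μ.restrict T B := (Measure.restrict_apply hB).symm

lemma withDensity_sub_le (m : Measure X) (g h : X → ENNReal) (hg : Measurable g)
    (hh : Measurable h) (hfin : ∫⁻ x, h x ∂m ≠ ⊤) :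
    m.withDensity (fun x => g x - h x) ≤ m.withDensity g - m.withDensity h := by
  rw [Measure.sub_def]
  apply le_sInf
  intro τ hτ
  rw [Set.mem_setOf_eq] at hτ
  rw [Measure.le_iff]
  intro B hB
  set C := {x | h x ≤ g x} with hCdef
  have hC : MeasurableSet C := measurableSet_le hh hg
  have hBC : MeasurableSet (B ∩ C) := hB.inter hC
  have hzero : m.withDensity (fun x => g x - h x) (B \ C) = 0 := by
    rw [withDensity_apply _ (hB.diff hC)]
    rw [setLIntegral_congr_fun (hB.diff hC)
      (fun x hx => tsub_eq_zero_of_le (le_of_not_ge hx.2))]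
    simp
  have hsplit : m.withDensity (fun x => g x - h x) B
      = m.withDensity (fun x => g x - h x) (B ∩ C) := by
    rw [← measure_inter_add_diff B hC, hzero, add_zero]
  have hfinBC : ∫⁻ x in B ∩ C, h x ∂m ≠ ⊤ :=
    ne_top_of_le_ne_top hfin (setLIntegral_le_lintegral _ _)
  have hcancel : ∫⁻ x in B ∩ C, (g x - h x) ∂m + ∫⁻ x in B ∩ C, h x ∂m
      = ∫⁻ x in B ∩ C, g x ∂m := by
    rw [← lintegral_add_right _ hh]
    exact setLIntegral_congr_fun hBC (fun x hx => tsub_add_cancel_of_le hx.2)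
  have hle : ∫⁻ x in B ∩ C, g x ∂m ≤ τ (B ∩ C) + ∫⁻ x in B ∩ C, h x ∂m := by
    have := Measure.le_iff'.1 hτ (B ∩ C)
    rw [Measure.add_apply, withDensity_apply _ hBC, withDensity_apply _ hBC] at this
    exact this
  have hmain : ∫⁻ x in B ∩ C, (g x - h x) ∂m ≤ τ (B ∩ C) := by
    rw [← ENNReal.add_le_add_iff_right hfinBC, hcancel]
    exact hle
  calc m.withDensity (fun x => g x - h x) B
      = ∫⁻ x in B ∩ C, (g x - h x) ∂m := by rw [hsplit, withDensity_apply _ hBC]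
    _ ≤ τ (B ∩ C) := hmain
    _ ≤ τ B := measure_mono Set.inter_subset_left

lemma key_lower (m μ ν : Measure X) [SigmaFinite m] [IsFiniteMeasure μ] [IsFiniteMeasure ν] :
    (∫⁻ x, (μ.rnDeriv m x - ν.rnDeriv m x) ∂m)
      + (μ.singularPart m - ν.singularPart m) Set.univ ≤ (μ - ν) Set.univ := by
  haveI : IsFiniteMeasure (μ.singularPart m) :=
    isFiniteMeasure_of_le μ (Measure.singularPart_le μ m)
  haveI : IsFiniteMeasure (ν.singularPart m) :=
    isFiniteMeasure_of_le ν (Measure.singularPart_le ν m)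
  obtain ⟨s₁, hs₁, hσ₁, hm₁⟩ := μ.mutuallySingular_singularPart m
  obtain ⟨s₂, hs₂, hσ₂, hm₂⟩ := ν.mutuallySingular_singularPart m
  set S := s₁ᶜ ∪ s₂ᶜ with hSdef
  have hS : MeasurableSet S := hs₁.compl.union hs₂.compl
  have hmS : m S = 0 := measure_union_null hm₁ hm₂
  have hScompl : Sᶜ = s₁ ∩ s₂ := by rw [hSdef, Set.compl_union, compl_compl, compl_compl]
  have hσμSc : μ.singularPart m Sᶜ = 0 := by
    rw [hScompl]
    exact le_antisymm (le_trans (measure_mono Set.inter_subset_left) hσ₁.le) zero_le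
  have hσνSc : ν.singularPart m Sᶜ = 0 := by
    rw [hScompl]
    exact le_antisymm (le_trans (measure_mono Set.inter_subset_right) hσ₂.le) zero_le
  have hwdS : ∀ (κ : Measure X) [SigmaFinite κ], m.withDensity (κ.rnDeriv m) S = 0 := by
    intro κ _
    rw [withDensity_apply _ hS, Measure.restrict_eq_zero.mpr hmS, lintegral_zero_measure]
  have hwd_le : m.withDensity (μ.rnDeriv m) ≤ μ.restrict Sᶜ :=
    le_restrict_of_null _ μ (Measure.withDensity_rnDeriv_le μ m) hS.compl
      (by rw [compl_compl]; exact hwdS μ)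
  have hres_le : ν.restrict Sᶜ ≤ m.withDensity (ν.rnDeriv m) := by
    have hdecomp : ν.restrict Sᶜ = (m.withDensity (ν.rnDeriv m)).restrict Sᶜ
        + (ν.singularPart m).restrict Sᶜ := by
      rw [← Measure.restrict_add, Measure.rnDeriv_add_singularPart]
    rw [hdecomp, Measure.restrict_eq_zero.mpr hσνSc, add_zero]
    exact Measure.restrict_le_self
  have hsub1 : m.withDensity (fun x => μ.rnDeriv m x - ν.rnDeriv m x)
      ≤ μ.restrict Sᶜ - ν.restrict Sᶜ := by
    refine le_trans (withDensity_sub_le m _ _ (Measure.measurable_rnDeriv μ m)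
      (Measure.measurable_rnDeriv ν m) (Measure.lintegral_rnDeriv_lt_top ν m).ne) ?_
    apply Measure.sub_le_of_le_add
    calc m.withDensity (μ.rnDeriv m) ≤ μ.restrict Sᶜ := hwd_le
      _ ≤ (μ.restrict Sᶜ - ν.restrict Sᶜ) + ν.restrict Sᶜ := meas_le_sub_add _ _
      _ ≤ (μ.restrict Sᶜ - ν.restrict Sᶜ) + m.withDensity (ν.rnDeriv m) :=
          add_le_add_right hres_le _
  have hpart1 : ∫⁻ x, (μ.rnDeriv m x - ν.rnDeriv m x) ∂m ≤ (μ - ν) Sᶜ := by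
    calc ∫⁻ x, (μ.rnDeriv m x - ν.rnDeriv m x) ∂m
        = m.withDensity (fun x => μ.rnDeriv m x - ν.rnDeriv m x) Set.univ := by
          rw [withDensity_apply _ MeasurableSet.univ, setLIntegral_univ]
      _ ≤ (μ.restrict Sᶜ - ν.restrict Sᶜ) Set.univ := Measure.le_iff'.1 hsub1 _
      _ = ((μ - ν).restrict Sᶜ) Set.univ := by
          rw [Measure.restrict_sub_eq_restrict_sub_restrict hS.compl]
      _ = (μ - ν) Sᶜ := Measure.restrict_apply_univ _
  have hσμ_le : μ.singularPart m ≤ μ.restrict S :=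
    le_restrict_of_null _ μ (Measure.singularPart_le μ m) hS hσμSc
  have hres_leS : ν.restrict S ≤ ν.singularPart m := by
    have hdecomp : ν.restrict S = (m.withDensity (ν.rnDeriv m)).restrict S
        + (ν.singularPart m).restrict S := by
      rw [← Measure.restrict_add, Measure.rnDeriv_add_singularPart]
    rw [hdecomp, Measure.restrict_eq_zero.mpr (hwdS ν), zero_add]
    exact Measure.restrict_le_self
  have hsub2 : μ.singularPart m - ν.singularPart m ≤ μ.restrict S - ν.restrict S := by
    apply Measure.sub_le_of_le_add
    calc μ.singularPart m ≤ μ.restrict S := hσμ_le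
      _ ≤ (μ.restrict S - ν.restrict S) + ν.restrict S := meas_le_sub_add _ _
      _ ≤ (μ.restrict S - ν.restrict S) + ν.singularPart m := add_le_add_right hres_leS _
  have hpart2 : (μ.singularPart m - ν.singularPart m) Set.univ ≤ (μ - ν) S := by
    calc (μ.singularPart m - ν.singularPart m) Set.univ
        ≤ (μ.restrict S - ν.restrict S) Set.univ := Measure.le_iff'.1 hsub2 _
      _ = ((μ - ν).restrict S) Set.univ := by
          rw [Measure.restrict_sub_eq_restrict_sub_restrict hS]
      _ = (μ - ν) S := Measure.restrict_apply_univ _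
  calc (∫⁻ x, (μ.rnDeriv m x - ν.rnDeriv m x) ∂m)
      + (μ.singularPart m - ν.singularPart m) Set.univ
      ≤ (μ - ν) Sᶜ + (μ - ν) S := add_le_add hpart1 hpart2
    _ = (μ - ν) Set.univ := by rw [add_comm, measure_add_measure_compl hS]

end MeasureLemmas

theorem ThetaK_measure_growth_lipschitz (d : ℕ) (K : ℝ) (hK : 0 < K) :
    ∃ C : ℝ, 0 ≤ C ∧ ∀ ξ ξ' : Measure (Torus d),
      IsFiniteMeasure ξ → IsFiniteMeasure ξ' →
        ThetaKmeas d K ξ Set.univ ≤ ENNReal.ofReal C * ξ Set.univ ∧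
        tvDist (ThetaKmeas d K ξ) (ThetaKmeas d K ξ')
          ≤ ENNReal.ofReal C * tvDist ξ ξ' := by
  refine ⟨18 * K, by positivity, fun ξ ξ' hξ hξ' => ?_⟩
  haveI := hξ
  haveI := hξ'
  set L3 : ENNReal := ENNReal.ofReal (3 * K) with hL3
  have hcL3 : ENNReal.ofReal (K / 3) ≤ L3 := ENNReal.ofReal_le_ofReal (by nlinarith)
  -- The one-sided TV estimate
  have T1 : ∀ (μ ν : Measure (Torus d)), IsFiniteMeasure μ → IsFiniteMeasure ν →
      (ThetaKmeas d K μ - ThetaKmeas d K ν) Set.univ ≤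
        L3 * ((∫⁻ x, (μ.rnDeriv volume x - ν.rnDeriv volume x) ∂volume)
              + (∫⁻ x, (ν.rnDeriv volume x - μ.rnDeriv volume x) ∂volume))
          + ENNReal.ofReal (K / 3)
              * (μ.singularPart volume - ν.singularPart volume) Set.univ := by
    intro μ ν hμ hν
    haveI := hμ
    haveI := hν
    haveI : IsFiniteMeasure (μ.singularPart volume) :=
      isFiniteMeasure_of_le μ (Measure.singularPart_le μ volume)
    haveI : IsFiniteMeasure (ν.singularPart volume) :=
      isFiniteMeasure_of_le ν (Measure.singularPart_le ν volume)
    set uμ := μ.rnDeriv volume with huμ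
    set uν := ν.rnDeriv volume with huν
    have hmu : Measurable uμ := Measure.measurable_rnDeriv μ volume
    have hmv : Measurable uν := Measure.measurable_rnDeriv ν volume
    set fμ : Torus d → ENNReal := fun x => ENNReal.ofReal (ThetaKfun K (uμ x).toReal) with hfμ
    set fν : Torus d → ENNReal := fun x => ENNReal.ofReal (ThetaKfun K (uν x).toReal) with hfν
    set w : Torus d → ENNReal := fun x => L3 * ((uμ x - uν x) + (uν x - uμ x)) with hw
    have hwmeas : Measurable w := ((hmu.sub hmv).add (hmv.sub hmu)).const_mul _
    have hae : fμ ≤ᵐ[(volume : Measure (Torus d))] w + fν := by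
      filter_upwards [Measure.rnDeriv_lt_top μ volume, Measure.rnDeriv_lt_top ν volume]
        with x h1 h2
      simp only [Pi.add_apply]
      set a := (uμ x).toReal with hadef
      set b := (uν x).toReal with hbdef
      have ha : 0 ≤ a := ENNReal.toReal_nonneg
      have hb : 0 ≤ b := ENNReal.toReal_nonneg
      have hax : ENNReal.ofReal a = uμ x := ENNReal.ofReal_toReal h1.ne
      have hbx : ENNReal.ofReal b = uν x := ENNReal.ofReal_toReal h2.ne
      have h3 : ThetaKfun K a ≤ ThetaKfun K b + 3 * K * |a - b| := by
        have h4 := thetaKfun_lipschitz hK ha hb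
        have h5 := le_abs_self (ThetaKfun K a - ThetaKfun K b)
        linarith
      have habs : ENNReal.ofReal |a - b| ≤ (uμ x - uν x) + (uν x - uμ x) := by
        rcases le_total a b with h | h
        · rw [abs_of_nonpos (sub_nonpos.mpr h), neg_sub,
            ENNReal.ofReal_sub _ ha, hax, hbx]
          exact le_add_self
        · rw [abs_of_nonneg (sub_nonneg.mpr h), ENNReal.ofReal_sub _ hb, hax, hbx]
          exact le_self_add
      calc fμ x = ENNReal.ofReal (ThetaKfun K a) := rfl
        _ ≤ ENNReal.ofReal (ThetaKfun K b + 3 * K * |a - b|) :=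
            ENNReal.ofReal_le_ofReal h3
        _ = ENNReal.ofReal (ThetaKfun K b) + ENNReal.ofReal (3 * K * |a - b|) :=
            ENNReal.ofReal_add (thetaKfun_nonneg hK hb) (by positivity)
        _ = fν x + L3 * ENNReal.ofReal |a - b| := by
            rw [ENNReal.ofReal_mul (by positivity)]
        _ ≤ fν x + L3 * ((uμ x - uν x) + (uν x - uμ x)) :=
            add_le_add_right (mul_le_mul_right habs _) _
        _ = w x + fν x := by rw [add_comm]
    have hΘle : ThetaKmeas d K μ ≤
        (volume.withDensity w + ENNReal.ofReal (K / 3)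
          • (μ.singularPart volume - ν.singularPart volume)) + ThetaKmeas d K ν := by
      have hwd : volume.withDensity fμ ≤ volume.withDensity w + volume.withDensity fν := by
        calc volume.withDensity fμ ≤ volume.withDensity (w + fν) := withDensity_mono hae
          _ = volume.withDensity w + volume.withDensity fν := withDensity_add_left hwmeas _
      have hσle : ENNReal.ofReal (K / 3) • μ.singularPart volume ≤
          ENNReal.ofReal (K / 3) • (μ.singularPart volume - ν.singularPart volume)
            + ENNReal.ofReal (K / 3) • ν.singularPart volume := by
        rw [← smul_add]
        have h := meas_le_sub_add (μ.singularPart volume) (ν.singularPart volume)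
        rw [Measure.le_iff]
        intro s hs
        simp only [Measure.smul_apply, smul_eq_mul]
        exact mul_le_mul_right (Measure.le_iff'.1 h s) _
      calc ThetaKmeas d K μ
          = volume.withDensity fμ + ENNReal.ofReal (K / 3) • μ.singularPart volume := rfl
        _ ≤ (volume.withDensity w + volume.withDensity fν)
              + (ENNReal.ofReal (K / 3) • (μ.singularPart volume - ν.singularPart volume)
                + ENNReal.ofReal (K / 3) • ν.singularPart volume) := add_le_add hwd hσle
        _ = (volume.withDensity w + ENNReal.ofReal (K / 3)
              • (μ.singularPart volume - ν.singularPart volume)) + ThetaKmeas d K ν := by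
            rw [add_add_add_comm]; rfl
    have hsub := Measure.sub_le_of_le_add hΘle
    have hwuniv : volume.withDensity w Set.univ =
        L3 * ((∫⁻ x, (uμ x - uν x) ∂volume) + (∫⁻ x, (uν x - uμ x) ∂volume)) := by
      rw [withDensity_apply _ MeasurableSet.univ, setLIntegral_univ, hw]
      beta_reduce
      rw [lintegral_const_mul (f := fun x => (uμ x - uν x) + (uν x - uμ x)) _
        ((hmu.sub hmv).add (hmv.sub hmu))]
      rw [lintegral_add_left (f := fun x => uμ x - uν x) (hmu.sub hmv)]
    calc (ThetaKmeas d K μ - ThetaKmeas d K ν) Set.univ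
        ≤ (volume.withDensity w + ENNReal.ofReal (K / 3)
            • (μ.singularPart volume - ν.singularPart volume)) Set.univ :=
          Measure.le_iff'.1 hsub _
      _ = L3 * ((∫⁻ x, (uμ x - uν x) ∂volume) + (∫⁻ x, (uν x - uμ x) ∂volume))
            + ENNReal.ofReal (K / 3)
              * (μ.singularPart volume - ν.singularPart volume) Set.univ := by
          rw [Measure.add_apply, hwuniv, Measure.smul_apply, smul_eq_mul]
  constructor
  · -- Growth bound
    haveI : IsFiniteMeasure (ξ.singularPart volume) :=
      isFiniteMeasure_of_le ξ (Measure.singularPart_le ξ volume)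
    set uμ := ξ.rnDeriv volume with huμ
    have hmu : Measurable uμ := Measure.measurable_rnDeriv ξ volume
    have hgae : ∀ᵐ x ∂(volume : Measure (Torus d)),
        ENNReal.ofReal (ThetaKfun K (uμ x).toReal) ≤ L3 * uμ x := by
      filter_upwards [Measure.rnDeriv_lt_top ξ volume] with x h1
      have ha : (0:ℝ) ≤ (uμ x).toReal := ENNReal.toReal_nonneg
      have h2 : ThetaKfun K (uμ x).toReal ≤ 3 * K * (uμ x).toReal := by
        have := thetaKfun_linear hK ha
        nlinarith
      calc ENNReal.ofReal (ThetaKfun K (uμ x).toReal)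
          ≤ ENNReal.ofReal (3 * K * (uμ x).toReal) := ENNReal.ofReal_le_ofReal h2
        _ = L3 * ENNReal.ofReal ((uμ x).toReal) := ENNReal.ofReal_mul (by positivity)
        _ = L3 * uμ x := by rw [ENNReal.ofReal_toReal h1.ne]
    have hint : ∫⁻ x, ENNReal.ofReal (ThetaKfun K (uμ x).toReal) ∂volume
        ≤ L3 * volume.withDensity uμ Set.univ := by
      calc ∫⁻ x, ENNReal.ofReal (ThetaKfun K (uμ x).toReal) ∂volume
          ≤ ∫⁻ x, L3 * uμ x ∂volume := lintegral_mono_ae hgae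
        _ = L3 * ∫⁻ x, uμ x ∂volume := lintegral_const_mul _ hmu
        _ = L3 * volume.withDensity uμ Set.univ := by
            rw [withDensity_apply _ MeasurableSet.univ, setLIntegral_univ]
    have hdecomp : volume.withDensity uμ Set.univ + ξ.singularPart volume Set.univ
        = ξ Set.univ := by
      have h := Measure.rnDeriv_add_singularPart ξ volume
      calc volume.withDensity uμ Set.univ + ξ.singularPart volume Set.univ
          = (volume.withDensity uμ + ξ.singularPart volume) Set.univ := by
            rw [Measure.add_apply]
        _ = ξ Set.univ := by rw [h]
    have hL3le : L3 ≤ ENNReal.ofReal (18 * K) := ENNReal.ofReal_le_ofReal (by nlinarith)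
    calc ThetaKmeas d K ξ Set.univ
        = ∫⁻ x, ENNReal.ofReal (ThetaKfun K (uμ x).toReal) ∂volume
          + ENNReal.ofReal (K / 3) * ξ.singularPart volume Set.univ := by
          rw [ThetaKmeas, Measure.add_apply, Measure.smul_apply, smul_eq_mul,
            withDensity_apply _ MeasurableSet.univ, setLIntegral_univ]
      _ ≤ L3 * volume.withDensity uμ Set.univ + L3 * ξ.singularPart volume Set.univ :=
          add_le_add hint (mul_le_mul_left hcL3 _)
      _ = L3 * ξ Set.univ := by rw [← mul_add, hdecomp]
      _ ≤ ENNReal.ofReal (18 * K) * ξ Set.univ := mul_le_mul_left hL3le _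
  · -- Lipschitz bound
    set A := ∫⁻ x, (ξ.rnDeriv volume x - ξ'.rnDeriv volume x) ∂(volume : Measure (Torus d))
    set B := ∫⁻ x, (ξ'.rnDeriv volume x - ξ.rnDeriv volume x) ∂(volume : Measure (Torus d))
    set P := (ξ.singularPart volume - ξ'.singularPart volume) Set.univ
    set Q := (ξ'.singularPart volume - ξ.singularPart volume) Set.univ
    set T := tvDist ξ ξ' with hT
    have hD1 : A + P ≤ (ξ - ξ') Set.univ := key_lower volume ξ ξ'
    have hD2 : B + Q ≤ (ξ' - ξ) Set.univ := key_lower volume ξ' ξ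
    have hTA : A ≤ T := le_trans (le_trans le_self_add hD1) le_self_add
    have hTB : B ≤ T := le_trans (le_trans le_self_add hD2) le_add_self
    have hTP : P ≤ T := le_trans (le_trans le_add_self hD1) le_self_add
    have hTQ : Q ≤ T := le_trans (le_trans le_add_self hD2) le_add_self
    have h1 := T1 ξ ξ' hξ hξ'
    have h2 := T1 ξ' ξ hξ' hξ
    have h12 : L3 + L3 + (L3 + L3) + (L3 + L3) = ENNReal.ofReal (18 * K) := by
      have he : (18:ℝ) * K = 3 * K + 3 * K + (3 * K + 3 * K) + (3 * K + 3 * K) := by ring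
      rw [he, ENNReal.ofReal_add (by positivity) (by positivity),
        ENNReal.ofReal_add (by positivity) (by positivity),
        ENNReal.ofReal_add (by positivity) (by positivity), hL3]
    calc tvDist (ThetaKmeas d K ξ) (ThetaKmeas d K ξ')
        = (ThetaKmeas d K ξ - ThetaKmeas d K ξ') Set.univ
          + (ThetaKmeas d K ξ' - ThetaKmeas d K ξ) Set.univ := rfl
      _ ≤ (L3 * (A + B) + ENNReal.ofReal (K / 3) * P)
          + (L3 * (B + A) + ENNReal.ofReal (K / 3) * Q) := add_le_add h1 h2
      _ ≤ (L3 * (T + T) + L3 * T) + (L3 * (T + T) + L3 * T) := by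
          refine add_le_add (add_le_add ?_ ?_) (add_le_add ?_ ?_)
          · exact mul_le_mul' le_rfl (add_le_add hTA hTB)
          · exact mul_le_mul' hcL3 hTP
          · exact mul_le_mul' le_rfl (add_le_add hTB hTA)
          · exact mul_le_mul' hcL3 hTQ
      _ = (L3 + L3 + (L3 + L3) + (L3 + L3)) * T := by ring
      _ = ENNReal.ofReal (18 * K) * T := by rw [h12]
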